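/- Let R be an integrally closed integral domain with quotient field K, and define, for nonzero fractional ideals I of R, I^* = ⋃{(IJ : J) : J a nonzero finitely generated fractional ideal of R}, where (IJ : J) = {x ∈ K : xJ ⊆ IJ}. Then the *-maximal ideals of R are exactly the maximal ideals of R; that is, a proper nonzero integral ideal Q of R is *-maximal if and only if Q is a maximal ideal of R. -/
import Mathlib


open Pointwise

/-- A *semistar operation* on a domain `S` with quotient field `M`. -/
structure IsSemistarOperation (S M : Type*) [CommRing S] [Field M] [Algebra S M]
    (star : Submodule S M → Submodule S M) : Prop where
  smul_eq : ∀ a : M, a ≠ 0 → ∀ E : Submodule S M, E ≠ ⊥ → star (a • E) = a • star E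
  le_star : ∀ E : Submodule S M, E ≠ ⊥ → E ≤ star E
  mono : ∀ E F : Submodule S M, E ≠ ⊥ → F ≠ ⊥ → E ≤ F → star E ≤ star F
  idem : ∀ E : Submodule S M, E ≠ ⊥ → star (star E) = star E

/-- A semistar operation has *finite character* if
`E^* = ⋃ {F^* : F nonzero finitely generated, F ⊆ E}`. -/
def SemistarFiniteCharacter (S M : Type*) [CommRing S] [Field M] [Algebra S M]
    (star : Submodule S M → Submodule S M) : Prop :=
  ∀ E : Submodule S M, E ≠ ⊥ → ∀ x : M,
    x ∈ star E ↔ ∃ F : Submodule S M, F ≠ ⊥ ∧ F.FG ∧ F ≤ E ∧ x ∈ star F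

/-- The set `E^* = ⋃ {(EJ : J) : J a nonzero finitely generated fractional ideal of S}`,
where `(EJ : J) = {x : xJ ⊆ EJ}`. -/
def bStarSet {S M : Type*} [CommRing S] [Field M] [Algebra S M] (E : Submodule S M) : Set M :=
  ⋃ J ∈ {J : Submodule S M | J ≠ ⊥ ∧ J.FG ∧ IsFractional (nonZeroDivisors S) J},
    (((E * J) / J : Submodule S M) : Set M)

variable {R K : Type*} [CommRing R] [IsDomain R] [Field K] [Algebra R K] [IsFractionRing R K]

/-- The image of an integral ideal of `R` in the quotient field `K`. -/
def idealToSub (R : Type*) {K : Type*} [CommRing R] [Field K] [Algebra R K]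
    (Q : Ideal R) : Submodule R K :=
  Submodule.map (Algebra.linearMap R K) Q


omit [IsDomain R] [IsFractionRing R K] in
lemma idealToSub_le_one (Q : Ideal R) : idealToSub R Q ≤ (1 : Submodule R K) := by
  rintro x ⟨r, _, rfl⟩
  exact Submodule.mem_one.mpr ⟨r, rfl⟩

lemma star_of_maximal (M : Ideal R) [IsIntegrallyClosed R] (hM : M.IsMaximal) :
    bStarSet (idealToSub R M : Submodule R K) = ((idealToSub R M : Submodule R K) : Set K) := by
  ext x
  simp only [bStarSet, Set.mem_iUnion, Set.mem_setOf_eq, SetLike.mem_coe, exists_prop]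
  constructor
  · rintro ⟨J, ⟨hJ0, hJfg, _⟩, hx⟩
    rw [Submodule.mem_div_iff_forall_mul_mem] at hx
    have hMJ : idealToSub R M * J ≤ M • J := by
      refine Submodule.mul_le.2 ?_
      rintro a ⟨q, hq, rfl⟩ b hb
      have : (Algebra.linearMap R K) q * b = q • b := (Algebra.smul_def q b).symm
      rw [this]
      exact Submodule.smul_mem_smul hq hb
    have hint : IsIntegral R x := by
      refine isIntegral_of_smul_mem_submodule (A := K) J hJ0 hJfg x (fun n hn => ?_)
      rw [smul_eq_mul]
      exact (Submodule.mul_le.2 (fun a ha b hb =>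
        Submodule.mul_mem_mul (idealToSub_le_one M ha) hb)).trans
        (le_of_eq (one_mul J)) (hx n hn)
    obtain ⟨r, rfl⟩ := IsIntegrallyClosed.isIntegral_iff.mp hint
    refine ⟨r, ?_, rfl⟩
    by_contra hrM
    obtain ⟨y, i, hiM, hyi⟩ := hM.exists_inv hrM
    have hle : J ≤ M • J := by
      intro n hn
      have h1 : (y * r + i) • n = n := by rw [hyi, one_smul]
      rw [← h1, add_smul, mul_smul]
      refine Submodule.add_mem _ (Submodule.smul_mem _ y ?_) (Submodule.smul_mem_smul hiM hn)
      have : r • n = algebraMap R K r * n := Algebra.smul_def r n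
      rw [this]
      exact hMJ (hx n hn)
    obtain ⟨a, haM, ha0⟩ :=
      Submodule.exists_sub_one_mem_and_smul_eq_zero_of_fg_of_le_smul M J hJfg hle
    obtain ⟨n, hnJ, hn0⟩ := Submodule.exists_mem_ne_zero_of_ne_bot hJ0
    have ha : a = 0 := by
      have := ha0 n hnJ
      rw [Algebra.smul_def] at this
      rcases mul_eq_zero.mp this with h | h
      · exact (map_eq_zero_iff _ (IsFractionRing.injective R K)).mp h
      · exact absurd h hn0
    rw [ha, zero_sub] at haM
    exact hM.ne_top (Ideal.eq_top_of_isUnit_mem _ ((Ideal.neg_mem_iff _).mp haM) isUnit_one)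
  · intro hx
    refine ⟨1, ⟨?_, ?_, ?_⟩, ?_⟩
    · intro h
      have : (1 : K) ∈ (⊥ : Submodule R K) := h ▸ (Submodule.one_le.mp le_rfl)
      simp at this
    · rw [Submodule.one_eq_span]
      exact Submodule.fg_span_singleton 1
    · have := (1 : FractionalIdeal (nonZeroDivisors R) K).isFractional
      rwa [FractionalIdeal.coe_one] at this
    · rw [mul_one, Submodule.mem_div_iff_forall_mul_mem]
      rintro y hy
      obtain ⟨s, rfl⟩ := Submodule.mem_one.mp hy
      have : x * algebraMap R K s = s • x := by rw [Algebra.smul_def, mul_comm]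
      rw [this]
      exact Submodule.smul_mem _ s hx

/-- for `R` integrally closed and `*` defined by
`I^* = ⋃ {(IJ : J) : J nonzero f.g. fractional ideal}`, a proper nonzero integral ideal
`Q` of `R` is `*`-maximal iff `Q` is a maximal ideal of `R`. -/
theorem statement10 [IsIntegrallyClosed R] (Q : Ideal R) (hQ0 : Q ≠ ⊥) (hQt : Q ≠ ⊤) :
    (bStarSet (idealToSub R Q : Submodule R K) = ((idealToSub R Q : Submodule R K) : Set K) ∧
      ∀ J : Ideal R, J ≠ ⊥ → J ≠ ⊤ →
        bStarSet (idealToSub R J : Submodule R K) = ((idealToSub R J : Submodule R K) : Set K) →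
        Q ≤ J → Q = J) ↔
      Q.IsMaximal := by
  constructor
  · rintro ⟨_, hmax⟩
    obtain ⟨M, hMmax, hQM⟩ := Ideal.exists_le_maximal Q hQt
    have hM0 : M ≠ ⊥ := fun h => hQ0 (le_bot_iff.mp (h ▸ hQM))
    have hQeq := hmax M hM0 hMmax.ne_top (star_of_maximal M hMmax) hQM
    exact hQeq ▸ hMmax
  · intro hQmax
    exact ⟨star_of_maximal Q hQmax, fun J _ hJt _ hQJ => hQmax.eq_of_le hJt hQJ⟩
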